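/- Every join-continuous function f : [0,1] → [0,1] is the pointwise supremum of the nonzero one-step functions e_{x,y} below it; in fact f = ⨆ {e_{x,y} | x, y ∈ ℚ ∩ [0,1], e_{x,y} ≤ f}. -/
import Mathlib


open unitInterval

instance : Fact ((0:ℝ) ≤ 1) := ⟨zero_le_one⟩

/-- A self-map of `[0,1]` is join-continuous if it preserves all suprema. -/
def JoinCont (f : unitInterval → unitInterval) : Prop :=
  ∀ X : Set unitInterval, f (sSup X) = sSup (f '' X)

/-- The one-step function `e_{x,y}`: value `0` on `[0,x]` and `y` on `(x,1]`. -/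
noncomputable def estep (x y : unitInterval) (t : unitInterval) : unitInterval :=
  if t ≤ x then 0 else y

lemma sSup_Iio_eq (t : unitInterval) : sSup (Set.Iio t) = t := by
  apply le_antisymm (sSup_le fun s hs => le_of_lt hs)
  by_contra h
  push_neg at h
  obtain ⟨s, hs1, hs2⟩ := exists_between (show ((sSup (Set.Iio t) : unitInterval) : ℝ) < t from h)
  have hs : s ∈ unitInterval := ⟨le_trans (sSup (Set.Iio t)).2.1 hs1.le, hs2.le.trans t.2.2⟩
  have : (⟨s, hs⟩ : unitInterval) ≤ sSup (Set.Iio t) := le_sSup hs2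
  exact absurd hs1 (not_lt.mpr this)

lemma estep_le_of_mono {f : unitInterval → unitInterval} (hmono : Monotone f)
    (x : unitInterval) {y : unitInterval} (hy : y ≤ f x) : estep x y ≤ f := by
  intro u
  unfold estep
  split
  · exact nonneg'
  · exact hy.trans (hmono (le_of_lt (not_le.mp (by assumption))))

/-- Every join-continuous `f : [0,1] → [0,1]` is the pointwise supremum of the
nonzero one-step functions below it, and even of the rational one-step
functions below it. -/
theorem stmt_18 (f : unitInterval → unitInterval) (hf : JoinCont f) :
    (∀ t, f t =
      ⨆ p ∈ {p : unitInterval × unitInterval |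
              estep p.1 p.2 ≤ f ∧ estep p.1 p.2 ≠ fun _ => 0},
        estep p.1 p.2 t) ∧
    (∀ t, f t =
      ⨆ p ∈ {p : unitInterval × unitInterval |
              (∃ q : ℚ, (p.1 : ℝ) = q) ∧ (∃ q : ℚ, (p.2 : ℝ) = q) ∧
                estep p.1 p.2 ≤ f},
        estep p.1 p.2 t) := by
  have hmono : Monotone f := by
    intro a b hab
    have h := hf {a, b}
    rw [sSup_pair, sup_eq_right.mpr hab, Set.image_pair, sSup_pair] at h
    exact le_sup_left.trans h.ge
  have key : ∀ t, f t = sSup (f '' Set.Iio t) := fun t =>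
    (congrArg f (sSup_Iio_eq t).symm).trans (hf _)
  constructor
  · intro t
    apply le_antisymm
    · rw [key t]
      apply sSup_le
      rintro _ ⟨s, hs, rfl⟩
      by_cases h0 : f s = 0
      · rw [h0]; exact nonneg'
      · have hle : estep s (f s) ≤ f := estep_le_of_mono hmono s le_rfl
        have hne : estep s (f s) ≠ fun _ => 0 := by
          intro hcontra
          have h1 := congrFun hcontra 1
          have hs1 : ¬ (1 : unitInterval) ≤ s := not_le.mpr (lt_of_lt_of_le hs (le_one t))
          rw [estep, if_neg hs1] at h1
          exact h0 h1
        refine le_trans ?_ (le_iSup₂ (f := fun p _ => estep p.1 p.2 t) (s, f s) ⟨hle, hne⟩)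
        rw [estep, if_neg (not_le.mpr hs)]
    · apply iSup₂_le
      rintro p ⟨hle, -⟩
      exact hle t
  · intro t
    apply le_antisymm
    · rw [key t]
      apply sSup_le
      rintro _ ⟨s, hs, rfl⟩
      obtain ⟨q, hq1, hq2⟩ := exists_rat_btwn (show (s : ℝ) < t from hs)
      have hqmem : (q : ℝ) ∈ unitInterval := ⟨le_trans s.2.1 hq1.le, hq2.le.trans t.2.2⟩
      set q' : unitInterval := ⟨(q : ℝ), hqmem⟩ with hq'
      have hsq : s ≤ q' := le_of_lt hq1
      have hstep : f s ≤ f q' := hmono hsq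
      refine hstep.trans (le_of_forall_lt fun c hc => ?_)
      obtain ⟨y, hy1, hy2⟩ := exists_rat_btwn (show (c : ℝ) < f q' from hc)
      have hymem : (y : ℝ) ∈ unitInterval := ⟨le_trans c.2.1 hy1.le, hy2.le.trans (f q').2.2⟩
      set y' : unitInterval := ⟨(y : ℝ), hymem⟩ with hy'
      have hyle : y' ≤ f q' := le_of_lt hy2
      have hmem : (q', y') ∈ {p : unitInterval × unitInterval |
          (∃ q : ℚ, (p.1 : ℝ) = q) ∧ (∃ q : ℚ, (p.2 : ℝ) = q) ∧ estep p.1 p.2 ≤ f} :=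
        ⟨⟨q, rfl⟩, ⟨y, rfl⟩, estep_le_of_mono hmono q' hyle⟩
      have hval : estep q' y' t = y' := by
        rw [estep, if_neg (not_le.mpr (show q' < t from hq2))]
      calc c < y' := hy1
        _ = estep q' y' t := hval.symm
        _ ≤ _ := le_iSup₂ (f := fun p _ => estep p.1 p.2 t) (q', y') hmem
    · apply iSup₂_le
      rintro p ⟨-, -, hle⟩
      exact hle t
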